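/- Let f : X → Y be a bornologous function between extended metric spaces. Then f is a large scale isomorphism (there exists a bornologous β : Y → X with f∘β ~ls id_Y and β∘f ~ls id_X) if and only if for every graph G (with its graph metric) and every Lipschitz function h : G → Y there exists a Lipschitz function h' : G → X with f∘h' ~ls h, and this lift is unique up to ls-equivalence: if h'' : G → X is Lipschitz with f∘h'' ~ls h, then h'' ~ls h'. -/

import Mathlib

open scoped ENNReal NNReal

/-- A function between extended metric spaces is bornologous if for every `t > 0`
there is `s > 0` such that `d(x,y) < t` implies `d(α x, α y) < s`. -/
def Bornologous {X : Type u} {Y : Type v} [EMetricSpace X] [EMetricSpace Y]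
    (α : X → Y) : Prop :=
  ∀ t : ℝ, 0 < t → ∃ s : ℝ, 0 < s ∧ ∀ x y : X,
    edist x y < ENNReal.ofReal t → edist (α x) (α y) < ENNReal.ofReal s

/-- `f ~ls g` : two functions into an extended metric space are ls-equivalent if they
are within finite distance from each other. -/
def LSEquiv {Z : Type w} {X : Type u} [EMetricSpace X] (f g : Z → X) : Prop :=
  (⨆ z : Z, edist (f z) (g z)) < ⊤

/-- A function from the vertex set of a graph (with its graph metric) to an extended
metric space is Lipschitz if there is `L < ∞` with `d(g v, g w) ≤ L · d_G(v,w)`. -/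
def GraphLipschitz {V : Type w} {X : Type u} [EMetricSpace X]
    (G : SimpleGraph V) (g : V → X) : Prop :=
  ∃ L : ℝ≥0, ∀ v w : V, edist (g v) (g w) ≤ (L : ℝ≥0∞) * (G.edist v w : ℝ≥0∞)

section Aux

variable {X : Type u} {Z : Type w} [EMetricSpace X]

lemma lsEquiv_iff {f g : Z → X} :
    LSEquiv f g ↔ ∃ C : ℝ≥0∞, C ≠ ⊤ ∧ ∀ z, edist (f z) (g z) ≤ C := by
  constructor
  · intro h
    exact ⟨⨆ z, edist (f z) (g z), h.ne, fun z => le_iSup (fun z => edist (f z) (g z)) z⟩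
  · rintro ⟨C, hC, hle⟩
    exact lt_of_le_of_lt (iSup_le hle) hC.lt_top

lemma lsEquiv_symm {f g : Z → X} (h : LSEquiv f g) : LSEquiv g f := by
  rw [lsEquiv_iff] at h ⊢
  obtain ⟨C, hC, hle⟩ := h
  exact ⟨C, hC, fun z => by rw [edist_comm]; exact hle z⟩

lemma lsEquiv_trans {f g k : Z → X} (h1 : LSEquiv f g) (h2 : LSEquiv g k) : LSEquiv f k := by
  rw [lsEquiv_iff] at h1 h2 ⊢
  obtain ⟨C1, hC1, hle1⟩ := h1
  obtain ⟨C2, hC2, hle2⟩ := h2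
  exact ⟨C1 + C2, by finiteness, fun z =>
    le_trans (edist_triangle _ (g z) _) (add_le_add (hle1 z) (hle2 z))⟩

lemma lsEquiv_comp {W : Type w'} {F G : Z → X} (h : LSEquiv F G) (k : W → Z) :
    LSEquiv (fun w => F (k w)) (fun w => G (k w)) :=
  lt_of_le_of_lt (iSup_le fun w => le_iSup (fun z => edist (F z) (G z)) (k w)) h

lemma lsEquiv_refl (f : Z → X) : LSEquiv f f := by
  rw [lsEquiv_iff]; exact ⟨0, by simp, fun z => by simp⟩

variable {Y : Type v} [EMetricSpace Y]

lemma born_bound {α : X → Y} (hα : Bornologous α) {B : ℝ≥0∞} (hB : B ≠ ⊤) :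
    ∃ S : ℝ≥0∞, S ≠ ⊤ ∧ ∀ x y : X, edist x y ≤ B → edist (α x) (α y) ≤ S := by
  obtain ⟨s, hs, hst⟩ := hα (B.toReal + 1) (by positivity)
  refine ⟨ENNReal.ofReal s, ENNReal.ofReal_ne_top, fun x y hxy => le_of_lt (hst x y ?_)⟩
  calc edist x y ≤ B := hxy
    _ = ENNReal.ofReal B.toReal := (ENNReal.ofReal_toReal hB).symm
    _ < ENNReal.ofReal (B.toReal + 1) := by
        rw [ENNReal.ofReal_lt_ofReal_iff (by positivity)]; linarith

variable {V : Type w} {G : SimpleGraph V} {g : V → X}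

lemma walk_bound {B : ℝ≥0∞} (hadj : ∀ a b : V, G.Adj a b → edist (g a) (g b) ≤ B)
    {v w : V} (p : G.Walk v w) : edist (g v) (g w) ≤ B * p.length := by
  induction p with
  | nil => simp
  | @cons u a w hadj' p ih =>
    rw [SimpleGraph.Walk.length_cons]
    push_cast
    rw [mul_add, mul_one]
    calc edist (g u) (g w) ≤ edist (g u) (g a) + edist (g a) (g w) := edist_triangle _ _ _
      _ ≤ B + B * p.length := add_le_add (hadj _ _ hadj') ih
      _ = B * p.length + B := add_comm _ _

lemma lip_of_adj {B : ℝ≥0} (hadj : ∀ a b : V, G.Adj a b → edist (g a) (g b) ≤ (B : ℝ≥0∞)) :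
    GraphLipschitz G g := by
  refine ⟨B + 1, fun v w => ?_⟩
  rcases eq_or_ne (G.edist v w) ⊤ with htop | hne
  · rw [htop, ENat.toENNReal_top, ENNReal.mul_top (by simp)]
    exact le_top
  · obtain ⟨p, hp⟩ := SimpleGraph.exists_walk_of_edist_ne_top hne
    calc edist (g v) (g w) ≤ (B : ℝ≥0∞) * p.length := walk_bound hadj p
      _ ≤ ((B + 1 : ℝ≥0) : ℝ≥0∞) * (G.edist v w : ℝ≥0∞) := by
          rw [← hp]
          push_cast
          gcongr
          · exact le_self_add

lemma bot_lip (g : V → X) : GraphLipschitz (⊥ : SimpleGraph V) g := by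
  refine ⟨1, fun v w => ?_⟩
  rcases eq_or_ne v w with rfl | hne
  · simp
  · rw [SimpleGraph.edist_bot_of_ne hne, ENat.toENNReal_top, ENNReal.mul_top (by simp)]
    exact le_top

end Aux

/-- a bornologous `f : X → Y` is a large scale isomorphism (has a
bornologous coarse inverse) iff every Lipschitz map `h` from a graph to `Y` lifts,
uniquely up to ls-equivalence, to a Lipschitz map to `X`. -/
theorem largeScaleIsomorphism_iff_lifting {X Y : Type u}
    [EMetricSpace X] [EMetricSpace Y] (f : X → Y) (hf : Bornologous f) :
    (∃ β : Y → X, Bornologous β ∧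
        LSEquiv (fun y => f (β y)) (fun y => y) ∧
        LSEquiv (fun x => β (f x)) (fun x => x)) ↔
    (∀ (V : Type u) (G : SimpleGraph V) (h : V → Y), GraphLipschitz G h →
        ∃ h' : V → X, GraphLipschitz G h' ∧ LSEquiv (fun v => f (h' v)) h ∧
          ∀ h'' : V → X, GraphLipschitz G h'' →
            LSEquiv (fun v => f (h'' v)) h → LSEquiv h'' h') := by
  constructor
  · rintro ⟨β, hβ, hfβ, hβf⟩
    intro V G h ⟨L, hL⟩
    obtain ⟨S, hSne, hS⟩ := born_bound hβ (B := (L : ℝ≥0∞)) ENNReal.coe_ne_top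
    refine ⟨fun v => β (h v), ?_, ?_, ?_⟩
    · refine lip_of_adj (B := S.toNNReal) fun a b hab => ?_
      rw [ENNReal.coe_toNNReal hSne]
      refine hS _ _ ?_
      calc edist (h a) (h b) ≤ (L : ℝ≥0∞) * (G.edist a b : ℝ≥0∞) := hL a b
        _ ≤ (L : ℝ≥0∞) * 1 := by
            gcongr
            rw [← SimpleGraph.edist_eq_one_iff_adj] at hab
            rw [hab]; simp
        _ = L := mul_one _
    · exact lsEquiv_comp hfβ h
    · intro h'' _ hfh''
      -- h'' ~ β ∘ h
      rw [lsEquiv_iff] at hβf hfh'' ⊢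
      obtain ⟨C2, hC2, hle2⟩ := hβf
      obtain ⟨C3, hC3, hle3⟩ := hfh''
      obtain ⟨S', hS'ne, hS'⟩ := born_bound hβ hC3
      refine ⟨C2 + S', by finiteness, fun v => ?_⟩
      calc edist (h'' v) (β (h v))
          ≤ edist (h'' v) (β (f (h'' v))) + edist (β (f (h'' v))) (β (h v)) :=
            edist_triangle _ _ _
        _ ≤ C2 + S' := by
            gcongr
            · rw [edist_comm]; exact hle2 (h'' v)
            · exact hS' _ _ (hle3 v)
  · intro P
    obtain ⟨β, _, hfβ, uniq_bot⟩ := P Y ⊥ id (bot_lip id)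
    have hβf : LSEquiv (fun x => β (f x)) (fun x => x) := by
      obtain ⟨h₀, _, hfh₀, uniq⟩ := P X ⊥ f (bot_lip f)
      have h1 : LSEquiv (fun x : X => x) h₀ :=
        uniq id (bot_lip id) (lsEquiv_refl f)
      have h2 : LSEquiv (fun x => β (f x)) h₀ :=
        uniq (fun x => β (f x)) (bot_lip _) (lsEquiv_comp hfβ f)
      exact lsEquiv_trans h2 (lsEquiv_symm h1)
    refine ⟨β, ?_, hfβ, hβf⟩
    intro t ht
    set Gt : SimpleGraph Y :=
      { Adj := fun a b => a ≠ b ∧ edist a b < ENNReal.ofReal t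
        symm := ⟨by
          rintro a b ⟨hne, hd⟩
          exact ⟨hne.symm, by rwa [edist_comm]⟩⟩
        loopless := ⟨fun a ha => ha.1 rfl⟩ } with hGt
    have hid : GraphLipschitz Gt (fun y : Y => y) := by
      refine lip_of_adj (B := t.toNNReal) fun a b hab => ?_
      have : edist a b < ENNReal.ofReal t := hab.2
      rw [ENNReal.ofReal] at this
      exact this.le
    obtain ⟨ht', ⟨Lt, hLt⟩, hfht', _⟩ := P Y Gt (fun y => y) hid
    have hclose : LSEquiv ht' β := uniq_bot ht' (bot_lip ht') hfht'
    rw [lsEquiv_iff] at hclose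
    obtain ⟨C, hC, hCle⟩ := hclose
    set D : ℝ≥0∞ := C + Lt + C with hD
    have hDne : D ≠ ⊤ := by finiteness
    refine ⟨D.toReal + 1, by positivity, fun a b hab => ?_⟩
    have key : edist (β a) (β b) ≤ D := by
      rcases eq_or_ne a b with rfl | hne
      · simp
      · have hadj : Gt.Adj a b := ⟨hne, hab⟩
        calc edist (β a) (β b)
            ≤ edist (β a) (ht' a) + edist (ht' a) (ht' b) + edist (ht' b) (β b) :=
              edist_triangle4 _ _ _ _
          _ ≤ C + Lt + C := by
              gcongr
              · rw [edist_comm]; exact hCle a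
              · calc edist (ht' a) (ht' b) ≤ (Lt : ℝ≥0∞) * (Gt.edist a b : ℝ≥0∞) := hLt a b
                  _ = Lt := by
                      rw [← SimpleGraph.edist_eq_one_iff_adj] at hadj
                      rw [hadj]; simp
              · exact hCle b
    calc edist (β a) (β b) ≤ D := key
      _ = ENNReal.ofReal D.toReal := (ENNReal.ofReal_toReal hDne).symm
      _ < ENNReal.ofReal (D.toReal + 1) := by
          rw [ENNReal.ofReal_lt_ofReal_iff (by positivity)]; linarith
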